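/- Let C ⊂ ℝ³ be a closed convex cone with apex at the origin that is not a half-space and has nonempty interior. If C admits infinitely many distinct planes of symmetry through the origin all containing a common line L, then C is a right circular cone (i.e., C is invariant under all rotations about L). -/

import Mathlib

noncomputable section

local notation "E" => EuclideanSpace ℝ (Fin 3)


local notation "E3" => EuclideanSpace ℝ (Fin 3)
local notation "⟪" x ", " y "⟫" => @inner ℝ _ _ x y

namespace Stmt14Aux

open Real

def onb (f : Fin 3 → E3) (hf : Orthonormal ℝ f) : OrthonormalBasis (Fin 3) ℝ E3 :=
  (basisOfOrthonormalOfCardEqFinrank hf (by simp)).toOrthonormalBasis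
    (by rwa [coe_basisOfOrthonormalOfCardEqFinrank])

lemma onb_apply (f : Fin 3 → E3) (hf : Orthonormal ℝ f) (i : Fin 3) : onb f hf i = f i := by
  rw [onb, Module.Basis.coe_toOrthonormalBasis, coe_basisOfOrthonormalOfCardEqFinrank]

variable (B : OrthonormalBasis (Fin 3) ℝ E3)

lemma ip (i j : Fin 3) : ⟪B i, B j⟫ = if i = j then 1 else 0 :=
  orthonormal_iff_ite.mp B.orthonormal i j

lemma ip00 : ⟪B 0, B 0⟫ = 1 := by simpa using ip B 0 0
lemma ip11 : ⟪B 1, B 1⟫ = 1 := by simpa using ip B 1 1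
lemma ip22 : ⟪B 2, B 2⟫ = 1 := by simpa using ip B 2 2
lemma ip01 : ⟪B 0, B 1⟫ = 0 := by simpa using ip B 0 1
lemma ip02 : ⟪B 0, B 2⟫ = 0 := by simpa using ip B 0 2
lemma ip12 : ⟪B 1, B 2⟫ = 0 := by simpa using ip B 1 2
lemma ip10 : ⟪B 1, B 0⟫ = 0 := by simpa using ip B 1 0
lemma ip20 : ⟪B 2, B 0⟫ = 0 := by simpa using ip B 2 0
lemma ip21 : ⟪B 2, B 1⟫ = 0 := by simpa using ip B 2 1

lemma expand (x : E3) : ⟪B 0, x⟫ • B 0 + ⟪B 1, x⟫ • B 1 + ⟪B 2, x⟫ • B 2 = x := by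
  simpa [Fin.sum_univ_three] using B.sum_repr' x

lemma liext {S T : E3 ≃ₗᵢ[ℝ] E3} (h0 : S (B 0) = T (B 0)) (h1 : S (B 1) = T (B 1))
    (h2 : S (B 2) = T (B 2)) : S = T := by
  ext x
  rw [← expand B x]
  simp [map_add, map_smul, h0, h1, h2]

def rotFam (θ : ℝ) : Fin 3 → E3 :=
  ![B 0, cos θ • B 1 + sin θ • B 2, -sin θ • B 1 + cos θ • B 2]

lemma rotFam0 (θ : ℝ) : rotFam B θ 0 = B 0 := rfl
lemma rotFam1 (θ : ℝ) : rotFam B θ 1 = cos θ • B 1 + sin θ • B 2 := rfl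
lemma rotFam2 (θ : ℝ) : rotFam B θ 2 = -sin θ • B 1 + cos θ • B 2 := rfl

lemma rotFam_on (θ : ℝ) : Orthonormal ℝ (rotFam B θ) := by
  rw [orthonormal_iff_ite]
  have hs := sin_sq_add_cos_sq θ
  intro i j
  fin_cases i <;> fin_cases j <;>
    simp only [Fin.zero_eta, Fin.mk_one, Fin.reduceFinMk, Fin.isValue,
      rotFam0, rotFam1, rotFam2,
      inner_add_left, inner_add_right, real_inner_smul_left, real_inner_smul_right,
      ip00 B, ip11 B, ip22 B, ip01 B, ip02 B, ip12 B, ip10 B, ip20 B, ip21 B,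
      Fin.reduceEq, reduceIte] <;>
    nlinarith [hs]

def rho (θ : ℝ) : E3 ≃ₗᵢ[ℝ] E3 := B.repr.trans (onb (rotFam B θ) (rotFam_on B θ)).repr.symm

lemma rho_apply (θ : ℝ) (i : Fin 3) : rho B θ (B i) = rotFam B θ i := by
  simp [rho, B.repr_self, OrthonormalBasis.repr_symm_single, onb_apply]

lemma rho0 (θ : ℝ) : rho B θ (B 0) = B 0 := by rw [rho_apply, rotFam0]
lemma rho1 (θ : ℝ) : rho B θ (B 1) = cos θ • B 1 + sin θ • B 2 := by rw [rho_apply, rotFam1]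
lemma rho2 (θ : ℝ) : rho B θ (B 2) = -sin θ • B 1 + cos θ • B 2 := by rw [rho_apply, rotFam2]

lemma rho_eq_of {θ ψ : ℝ} (hc : cos θ = cos ψ) (hs : sin θ = sin ψ) : rho B θ = rho B ψ := by
  refine liext B ?_ ?_ ?_ <;> simp [rho0, rho1, rho2, hc, hs]

lemma rho_zero : rho B 0 = LinearIsometryEquiv.refl ℝ E3 := by
  refine liext B ?_ ?_ ?_ <;> simp [rho0, rho1, rho2]

lemma rho_add (θ ψ : ℝ) : rho B (θ + ψ) = (rho B ψ).trans (rho B θ) := by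
  refine liext B ?_ ?_ ?_ <;>
    simp only [LinearIsometryEquiv.trans_apply, map_add, map_smul, rho0, rho1, rho2,
      cos_add, sin_add] <;>
    module

lemma rho_inv_image {θ : ℝ} {C : Set (EuclideanSpace ℝ (Fin 3))} (h : rho B θ '' C = C) :
    rho B (-θ) '' C = C := by
  have h2 : (rho B θ).trans (rho B (-θ)) = LinearIsometryEquiv.refl ℝ E3 := by
    rw [← rho_add, neg_add_cancel, rho_zero]
  calc rho B (-θ) '' C = rho B (-θ) '' (rho B θ '' C) := by rw [h]
    _ = ((rho B θ).trans (rho B (-θ))) '' C := by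
        rw [LinearIsometryEquiv.coe_trans, Set.image_comp]
    _ = C := by rw [h2]; simp

lemma exists_cos_sin {a b : ℝ} (h : a ^ 2 + b ^ 2 = 1) : ∃ θ, cos θ = a ∧ sin θ = b := by
  have ha1 : -1 ≤ a := by nlinarith
  have ha2 : a ≤ 1 := by nlinarith
  have hs : sin (arccos a) = |b| := by
    rw [sin_arccos, show 1 - a ^ 2 = b ^ 2 by linarith, sqrt_sq_eq_abs]
  rcases le_or_gt 0 b with hb | hb
  · exact ⟨arccos a, cos_arccos ha1 ha2, by rwa [abs_of_nonneg hb] at hs⟩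
  · exact ⟨-arccos a, by rw [cos_neg]; exact cos_arccos ha1 ha2,
      by rw [sin_neg, hs, abs_of_neg hb, neg_neg]⟩

lemma sq_eq_zero' {x : ℝ} (h : x ^ 2 = 0) : x = 0 := by
  have := pow_eq_zero_iff (n := 2) (by norm_num) |>.mp h
  exact this

lemma sigma_aux {a b c d : ℝ} (e1 : a ^ 2 + b ^ 2 = 1) (e2 : c ^ 2 + d ^ 2 = 1)
    (e3 : a * c + b * d = 0) : (d = a ∧ c = -b) ∨ (d = -a ∧ c = b) := by
  have h0 : (a * d - b * c - 1) * (a * d - b * c + 1) = 0 := by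
    linear_combination (c ^ 2 + d ^ 2) * e1 + e2 - (a * c + b * d) * e3
  rcases mul_eq_zero.mp h0 with h | h
  · left
    have hsum : (d - a) ^ 2 + (c + b) ^ 2 = 0 := by linear_combination e1 + e2 - 2 * h
    have h1 : d - a = 0 := sq_eq_zero' (le_antisymm (by nlinarith [sq_nonneg (c + b)]) (sq_nonneg _))
    have h2 : c + b = 0 := sq_eq_zero' (le_antisymm (by nlinarith [sq_nonneg (d - a)]) (sq_nonneg _))
    constructor <;> linarith
  · right
    have hsum : (d + a) ^ 2 + (c - b) ^ 2 = 0 := by linear_combination e1 + e2 + 2 * h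
    have h1 : d + a = 0 := sq_eq_zero' (le_antisymm (by nlinarith [sq_nonneg (c - b)]) (sq_nonneg _))
    have h2 : c - b = 0 := sq_eq_zero' (le_antisymm (by nlinarith [sq_nonneg (d + a)]) (sq_nonneg _))
    constructor <;> linarith

lemma classify (S : E3 ≃ₗᵢ[ℝ] E3) (hu : S (B 0) = B 0) :
    (∃ θ, S = rho B θ) ∨
    (∃ a b : ℝ, a ^ 2 + b ^ 2 = 1 ∧ S (B 1) = a • B 1 + b • B 2 ∧
      S (B 2) = b • B 1 + -a • B 2) := by
  have h01 : ⟪B 0, S (B 1)⟫ = 0 := by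
    calc ⟪B 0, S (B 1)⟫ = ⟪S (B 0), S (B 1)⟫ := by rw [hu]
      _ = ⟪B 0, B 1⟫ := S.inner_map_map _ _
      _ = 0 := ip01 B
  have h02 : ⟪B 0, S (B 2)⟫ = 0 := by
    calc ⟪B 0, S (B 2)⟫ = ⟪S (B 0), S (B 2)⟫ := by rw [hu]
      _ = ⟪B 0, B 2⟫ := S.inner_map_map _ _
      _ = 0 := ip02 B
  set a := ⟪B 1, S (B 1)⟫ with ha
  set b := ⟪B 2, S (B 1)⟫ with hb
  set c := ⟪B 1, S (B 2)⟫ with hc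
  set d := ⟪B 2, S (B 2)⟫ with hd
  have hv : S (B 1) = a • B 1 + b • B 2 := by
    have h := expand B (S (B 1))
    rw [h01, zero_smul, zero_add] at h
    exact h.symm
  have hw : S (B 2) = c • B 1 + d • B 2 := by
    have h := expand B (S (B 2))
    rw [h02, zero_smul, zero_add] at h
    exact h.symm
  have e1 : a ^ 2 + b ^ 2 = 1 := by
    have h := S.inner_map_map (B 1) (B 1)
    rw [ip11 B, hv] at h
    simp only [inner_add_left, inner_add_right, real_inner_smul_left, real_inner_smul_right,
      ip11 B, ip12 B, ip21 B, ip22 B] at h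
    nlinarith [h]
  have e2 : c ^ 2 + d ^ 2 = 1 := by
    have h := S.inner_map_map (B 2) (B 2)
    rw [ip22 B, hw] at h
    simp only [inner_add_left, inner_add_right, real_inner_smul_left, real_inner_smul_right,
      ip11 B, ip12 B, ip21 B, ip22 B] at h
    nlinarith [h]
  have e3 : a * c + b * d = 0 := by
    have h := S.inner_map_map (B 1) (B 2)
    rw [ip12 B, hv, hw] at h
    simp only [inner_add_left, inner_add_right, real_inner_smul_left, real_inner_smul_right,
      ip11 B, ip12 B, ip21 B, ip22 B] at h
    nlinarith [h]
  clear_value a b c d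
  rcases sigma_aux e1 e2 e3 with ⟨hd', hc'⟩ | ⟨hd', hc'⟩
  · left
    obtain ⟨θ, hcos, hsin⟩ := exists_cos_sin e1
    refine ⟨θ, liext B ?_ ?_ ?_⟩
    · rw [hu, rho0]
    · rw [hv, rho1, hcos, hsin]
    · rw [hw, rho2, hcos, hsin, hd', hc']
  · right
    exact ⟨a, b, e1, hv, by rw [hw, hd', hc']⟩

lemma det_sigma (S : E3 ≃ₗᵢ[ℝ] E3) (hu : S (B 0) = B 0) {a b : ℝ} (hab : a ^ 2 + b ^ 2 = 1)
    (h1 : S (B 1) = a • B 1 + b • B 2) (h2 : S (B 2) = b • B 1 + -a • B 2) :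
    LinearMap.det (S.toLinearIsometry.toLinearMap) = -1 := by
  have hco : S.toLinearIsometry.toLinearMap = (S.toLinearEquiv : E3 →ₗ[ℝ] E3) := rfl
  rw [hco, ← LinearMap.det_toMatrix B.toBasis, Matrix.det_fin_three]
  have hM : ∀ i j : Fin 3,
      LinearMap.toMatrix B.toBasis B.toBasis (S.toLinearEquiv : E3 →ₗ[ℝ] E3) i j
        = ⟪B i, S (B j)⟫ := by
    intro i j
    simp [LinearMap.toMatrix_apply, OrthonormalBasis.coe_toBasis_repr_apply,
      OrthonormalBasis.repr_apply_apply, OrthonormalBasis.coe_toBasis]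
  simp only [hM, hu, h1, h2, inner_add_right, real_inner_smul_right,
    ip00 B, ip11 B, ip22 B, ip01 B, ip02 B, ip12 B, ip10 B, ip20 B, ip21 B]
  nlinarith [hab]

lemma rho_cont (x : E3) : Continuous fun θ => rho B θ x := by
  have hx : ∀ θ, rho B θ x = ⟪B 0, x⟫ • B 0 + ⟪B 1, x⟫ • (cos θ • B 1 + sin θ • B 2)
      + ⟪B 2, x⟫ • (-sin θ • B 1 + cos θ • B 2) := by
    intro θ
    conv_lhs => rw [← expand B x]
    simp only [map_add, map_smul, rho0, rho1, rho2]
  simp only [hx]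
  fun_prop

lemma rho_sub_zsmul (θ : ℝ) (n : ℤ) : rho B (θ - n • (2 * Real.pi)) = rho B θ :=
  rho_eq_of B (Real.cos_periodic.sub_zsmul_eq n) (Real.sin_periodic.sub_zsmul_eq n)

end Stmt14Aux



set_option maxHeartbeats 2000000 in
open Stmt14Aux Real in
/-- Let `C ⊂ ℝ³` be a closed convex cone with apex at the origin which is
not a half-space and has nonempty interior. If `C` admits infinitely many distinct planes
of symmetry through the origin all containing a common line `L`, then `C` is invariant
under all rotations about `L` (i.e. it is a right circular cone with axis `L`). -/
theorem stmt_14 (C : Set E)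
    (hCclosed : IsClosed C) (hCconv : Convex ℝ C)
    (hCcone : ∀ c ∈ C, ∀ l : ℝ, 0 ≤ l → l • c ∈ C)
    (hCint : (interior C).Nonempty)
    (hnothalf : ¬ ∃ f : E →L[ℝ] ℝ, f ≠ 0 ∧ C = {z | f z ≤ 0})
    (L : Submodule ℝ E) (hL : Module.finrank ℝ L = 1)
    (hsym : {P : Submodule ℝ E |
        Module.finrank ℝ P = 2 ∧ L ≤ P ∧ P.reflection '' C = C}.Infinite) :
    ∀ R : E ≃ₗᵢ[ℝ] E,
      LinearMap.det (R.toLinearIsometry.toLinearMap) = 1 → (∀ v ∈ L, R v = v) →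
      R '' C = C := by
  classical
  intro R hdet hfixL
  -- ## an adapted orthonormal basis
  have hLne : L ≠ ⊥ := by
    intro h
    rw [h] at hL
    simp at hL
  obtain ⟨x, hxL, hx0⟩ := L.ne_bot_iff.mp hLne
  have hxn : ‖x‖ ≠ 0 := norm_ne_zero_iff.mpr hx0
  set u : E := ‖x‖⁻¹ • x with hu_def
  have huL : u ∈ L := L.smul_mem _ hxL
  have hu0 : u ≠ 0 := smul_ne_zero (inv_ne_zero hxn) hx0
  have hun : ‖u‖ = 1 := by
    rw [hu_def, norm_smul, norm_inv, norm_norm, inv_mul_cancel₀ hxn]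
  set K : Submodule ℝ E := Submodule.span ℝ {u} with hK_def
  have hKo : Module.finrank ℝ Kᗮ = 2 := by
    have h1 := K.finrank_add_finrank_orthogonal
    rw [finrank_span_singleton hu0, finrank_euclideanSpace, Fintype.card_fin] at h1
    omega
  let bF : OrthonormalBasis (Fin 2) ℝ Kᗮ :=
    (stdOrthonormalBasis ℝ Kᗮ).reindex (finCongr (by rw [hKo]))
  have hfam : Orthonormal ℝ ![u, (bF 0 : E), (bF 1 : E)] := by
    have hbF := orthonormal_iff_ite.mp bF.orthonormal
    have hyp : ∀ i j : Fin 2, @inner ℝ _ _ (bF i : E) (bF j : E) = if i = j then (1:ℝ) else 0 := by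
      intro i j
      rw [← Submodule.coe_inner]
      exact hbF i j
    have huu : @inner ℝ _ _ u u = (1:ℝ) := by
      rw [real_inner_self_eq_norm_mul_norm, hun]
      norm_num
    have huv : ∀ i : Fin 2, @inner ℝ _ _ u (bF i : E) = (0:ℝ) := fun i =>
      Submodule.inner_right_of_mem_orthogonal (Submodule.mem_span_singleton_self u) (bF i).2
    have hvu : ∀ i : Fin 2, @inner ℝ _ _ (bF i : E) u = (0:ℝ) := fun i => by
      rw [real_inner_comm]
      exact huv i
    rw [orthonormal_iff_ite]
    intro i j
    fin_cases i <;> fin_cases j <;>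
      simp [huu, huv 0, huv 1, hvu 0, hvu 1, hyp 0 0, hyp 0 1, hyp 1 0, hyp 1 1,
          show ‖(bF 0 : E)‖ = 1 from bF.orthonormal.1 0, show ‖(bF 1 : E)‖ = 1 from bF.orthonormal.1 1, hun]
  obtain ⟨B, hB0⟩ : ∃ B : OrthonormalBasis (Fin 3) ℝ E, B 0 = u :=
    ⟨onb ![u, (bF 0 : E), (bF 1 : E)] hfam, by rw [onb_apply]; rfl⟩
  -- ## the set of angles whose rotation preserves C
  set Bset : Set ℝ := {θ | rho B θ '' C = C} with hBset_def
  have hzero : (0:ℝ) ∈ Bset := by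
    show rho B 0 '' C = C
    rw [rho_zero]
    simp
  have hadd : ∀ θ ψ : ℝ, θ ∈ Bset → ψ ∈ Bset → θ + ψ ∈ Bset := by
    intro θ ψ h1 h2
    show rho B (θ + ψ) '' C = C
    rw [rho_add, LinearIsometryEquiv.coe_trans, Set.image_comp]
    show rho B θ '' (rho B ψ '' C) = C
    rw [show rho B ψ '' C = C from h2]
    exact h1
  have hneg : ∀ θ ∈ Bset, -θ ∈ Bset := fun θ h => rho_inv_image B h
  have hclosed : IsClosed Bset := by
    have hset : Bset = (⋂ x ∈ C, {θ : ℝ | rho B θ x ∈ C})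
        ∩ (⋂ x ∈ C, {θ : ℝ | rho B (-θ) x ∈ C}) := by
      ext θ
      simp only [Set.mem_inter_iff, Set.mem_iInter, Set.mem_setOf_eq]
      constructor
      · intro h
        refine ⟨fun y hy => ?_, fun y hy => ?_⟩
        · rw [← show rho B θ '' C = C from h]
          exact Set.mem_image_of_mem _ hy
        · rw [← show rho B (-θ) '' C = C from hneg θ h]
          exact Set.mem_image_of_mem _ hy
      · rintro ⟨h1, h2⟩
        show rho B θ '' C = C
        apply Set.Subset.antisymm
        · rintro y ⟨z, hz, rfl⟩
          exact h1 z hz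
        · intro y hy
          refine ⟨rho B (-θ) y, h2 y hy, ?_⟩
          calc rho B θ (rho B (-θ) y) = ((rho B (-θ)).trans (rho B θ)) y := rfl
            _ = rho B (θ + -θ) y := by rw [← rho_add]
            _ = y := by rw [add_neg_cancel, rho_zero]; rfl
    rw [hset]
    apply IsClosed.inter <;> refine isClosed_biInter fun y hy => ?_
    · exact hCclosed.preimage (rho_cont B y)
    · exact hCclosed.preimage ((rho_cont B y).comp continuous_neg)
  -- ## infinitely many symmetries fixing B 0
  set G : Set (E ≃ₗᵢ[ℝ] E) := {S | S (B 0) = B 0 ∧ S '' C = C} with hG_def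
  have hGinf : G.Infinite := by
    have hinj : Set.InjOn (fun P : Submodule ℝ E => (P.reflection : E ≃ₗᵢ[ℝ] E))
        {P : Submodule ℝ E | Module.finrank ℝ P = 2 ∧ L ≤ P ∧ P.reflection '' C = C} := by
      intro P hP Q hQ hPQ
      ext z
      rw [← Submodule.reflection_eq_self_iff (K := P) z, ← Submodule.reflection_eq_self_iff (K := Q) z,
        show (P.reflection : E ≃ₗᵢ[ℝ] E) = Q.reflection from hPQ]
    have hsub : (fun P : Submodule ℝ E => (P.reflection : E ≃ₗᵢ[ℝ] E)) ''
        {P : Submodule ℝ E | Module.finrank ℝ P = 2 ∧ L ≤ P ∧ P.reflection '' C = C} ⊆ G := by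
      rintro S ⟨P, ⟨hP2, hLP, hPC⟩, rfl⟩
      exact ⟨by rw [hB0]; exact Submodule.reflection_mem_subspace_eq_self (hLP huL), hPC⟩
    exact Set.Infinite.mono hsub (hsym.image hinj)
  set Grot : Set (E ≃ₗᵢ[ℝ] E) := {S | (∃ θ, S = rho B θ) ∧ S '' C = C} with hGrot_def
  have hGrotinf : Grot.Infinite := by
    set Gsig : Set (E ≃ₗᵢ[ℝ] E) := {S | S ∈ G ∧ ¬ ∃ θ, S = rho B θ} with hGsig_def
    by_cases hfin : Gsig.Finite
    · have hsub : G \ Gsig ⊆ Grot := by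
        rintro S ⟨⟨hSu, hSC⟩, hnot⟩
        refine ⟨?_, hSC⟩
        by_contra hno
        exact hnot ⟨⟨hSu, hSC⟩, hno⟩
      exact Set.Infinite.mono hsub (hGinf.diff hfin)
    · have hGsiginf : Gsig.Infinite := hfin
      obtain ⟨σ₀, hσ₀⟩ := hGsiginf.nonempty
      obtain ⟨⟨hσu, hσC⟩, hσnot⟩ := hσ₀
      rcases classify B σ₀ hσu with hrot | ⟨a₀, b₀, hab₀, h1₀, h2₀⟩
      · exact absurd hrot hσnot
      have hinj2 : Set.InjOn (fun S : E ≃ₗᵢ[ℝ] E => S.trans σ₀) Gsig := by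
        intro S hS T hT h
        refine LinearIsometryEquiv.ext fun y => ?_
        have h3 := congrArg (fun W : E ≃ₗᵢ[ℝ] E => W y) h
        exact σ₀.injective (by simpa using h3)
      have hmap : (fun S : E ≃ₗᵢ[ℝ] E => S.trans σ₀) '' Gsig ⊆ Grot := by
        rintro W ⟨T, ⟨⟨hTu, hTC⟩, hTnot⟩, rfl⟩
        rcases classify B T hTu with hrot | ⟨a, b, hab, h1, h2⟩
        · exact absurd hrot hTnot
        constructor
        · obtain ⟨θ, hcos, hsin⟩ := exists_cos_sin
            (show (a * a₀ + b * b₀) ^ 2 + (a * b₀ - b * a₀) ^ 2 = 1 by nlinarith)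
          refine ⟨θ, liext B ?_ ?_ ?_⟩
          · show σ₀ (T (B 0)) = rho B θ (B 0)
            rw [hTu, hσu, rho0]
          · show σ₀ (T (B 1)) = rho B θ (B 1)
            rw [h1, map_add, map_smul, map_smul, h1₀, h2₀, rho1, hcos, hsin]
            module
          · show σ₀ (T (B 2)) = rho B θ (B 2)
            rw [h2, map_add, map_smul, map_smul, h1₀, h2₀, rho2, hcos, hsin]
            module
        · show (T.trans σ₀) '' C = C
          rw [LinearIsometryEquiv.coe_trans, Set.image_comp]
          show σ₀ '' (T '' C) = C
          rw [show T '' C = C from hTC]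
          exact hσC
      exact Set.Infinite.mono hmap (hGsiginf.image hinj2)
  -- ## infinitely many angles in a bounded window
  have htp : (0:ℝ) < 2 * π := Real.two_pi_pos
  set g : (E ≃ₗᵢ[ℝ] E) → ℝ :=
    fun S => if h : ∃ θ, S = rho B θ then toIcoMod htp 0 h.choose else 0 with hg_def
  have hg : ∀ S ∈ Grot, rho B (g S) = S ∧ g S ∈ Set.Ico (0:ℝ) (2 * π) := by
    rintro S ⟨hex, hSC⟩
    have hgS : g S = toIcoMod htp 0 hex.choose := dif_pos hex
    refine ⟨?_, ?_⟩
    · rw [hgS, toIcoMod, rho_sub_zsmul, ← hex.choose_spec]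
    · rw [hgS]
      simpa using toIcoMod_mem_Ico htp 0 hex.choose
  have hinjg : Set.InjOn g Grot := by
    intro S hS T hT h
    rw [← (hg S hS).1, h, (hg T hT).1]
  have himg : g '' Grot ⊆ Bset ∩ Set.Ico 0 (2 * π) := by
    rintro y ⟨S, hS, rfl⟩
    refine ⟨?_, (hg S hS).2⟩
    show rho B (g S) '' C = C
    rw [(hg S hS).1]
    exact hS.2
  have hBIco : (Bset ∩ Set.Ico 0 (2 * π)).Infinite :=
    Set.Infinite.mono himg (hGrotinf.image hinjg)
  -- ## subgroup dichotomy
  set Bsub : AddSubgroup ℝ :=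
    { carrier := Bset
      add_mem' := fun h1 h2 => hadd _ _ h1 h2
      zero_mem' := hzero
      neg_mem' := fun h => hneg _ h } with hBsub_def
  rcases AddSubgroup.dense_or_cyclic Bsub with hdense | ⟨a, ha⟩
  · -- dense case : Bset is everything
    have huniv : Bset = Set.univ := by
      have h1 : closure Bset = Bset := hclosed.closure_eq
      have h2 : closure Bset = Set.univ := hdense.closure_eq
      rw [← h1, h2]
    have hRu : R (B 0) = B 0 := by rw [hB0]; exact hfixL u huL
    rcases classify B R hRu with ⟨θ, hRθ⟩ | ⟨a, b, hab, h1, h2⟩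
    · have hθ : θ ∈ Bset := huniv ▸ Set.mem_univ θ
      rw [hRθ]
      exact hθ
    · exfalso
      have hds := det_sigma B R hRu hab h1 h2
      rw [hdet] at hds
      norm_num at hds
  · -- cyclic case : contradiction with infinitude
    exfalso
    have hmem : ∀ y ∈ Bset, ∃ n : ℤ, n • a = y := by
      intro y hy
      have h1 : y ∈ Bsub := hy
      rw [ha] at h1
      exact AddSubgroup.mem_closure_singleton.mp h1
    by_cases ha0 : a = 0
    · refine hBIco (Set.Finite.subset (Set.finite_singleton 0) ?_)
      rintro y ⟨hy, _⟩
      obtain ⟨n, rfl⟩ := hmem _ hy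
      simp [ha0]
    · refine hBIco (Set.Finite.subset ((Set.finite_Icc (-(⌈2 * π / |a|⌉)) ⌈2 * π / |a|⌉).image
        (fun n : ℤ => n • a)) ?_)
      rintro y ⟨hy, hy0, hy2⟩
      obtain ⟨n, rfl⟩ := hmem _ hy
      have hap : (0:ℝ) < |a| := abs_pos.mpr ha0
      have habs : |(n:ℝ)| * |a| < 2 * π := by
        rw [← abs_mul]
        rw [abs_of_nonneg (by simpa using hy0)]
        simpa using hy2
      have hlt : |(n:ℝ)| < 2 * π / |a| := (lt_div_iff₀ hap).mpr habs
      have hle : ((|n| : ℤ) : ℝ) ≤ ((⌈2 * π / |a|⌉ : ℤ) : ℝ) := by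
        rw [Int.cast_abs]
        exact le_trans hlt.le (Int.le_ceil _)
      have hle' : |n| ≤ ⌈2 * π / |a|⌉ := by exact_mod_cast hle
      obtain ⟨hn1, hn2⟩ := abs_le.mp hle'
      exact ⟨n, ⟨hn1, hn2⟩, rfl⟩

end
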